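/- Let S be a finite set with |S| = n, let Q ⊆ S with |Q| = q, and let α be a natural number with α ≤ n and q ≤ n. Then the number of pairs (A, B) of subsets of S with |A| = α, |B| = q and B ∩ (Q \ A) = ∅ equals Σ_{k=a}^{b} C(n+k-q, q)·C(q, k)·C(n-q, α-k), where a = max(0, α-n+q), b = min(α, q), and C(·,·) denotes the binomial coefficient (equal to 0 when the lower index exceeds the upper index). -/

import Mathlib

open Finset

lemma core_fiber_card {β : Type*} [DecidableEq β] (S Q : Finset β) (hQS : Q ⊆ S)
    (α k : ℕ) (hk : k ≤ α) :
    ((S.powersetCard α).filter (fun A => (A ∩ Q).card = k)).card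
      = Q.card.choose k * (S.card - Q.card).choose (α - k) := by
  rw [← Finset.card_sdiff_of_subset hQS, ← Finset.card_powersetCard, ← Finset.card_powersetCard,
    ← Finset.card_product]
  refine Finset.card_bij' (fun A _ => (A ∩ Q, A \ Q)) (fun p _ => p.1 ∪ p.2) ?_ ?_ ?_ ?_
  · intro A hA
    simp only [Finset.mem_filter, Finset.mem_powersetCard] at hA
    obtain ⟨⟨hAS, hAcard⟩, hAk⟩ := hA
    simp only [Finset.mem_product, Finset.mem_powersetCard]
    refine ⟨⟨Finset.inter_subset_right, hAk⟩,
      Finset.sdiff_subset_sdiff hAS (le_refl Q), ?_⟩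
    have := Finset.card_sdiff_add_card_inter A Q
    omega
  · intro p hp
    simp only [Finset.mem_product, Finset.mem_powersetCard] at hp
    obtain ⟨⟨h1Q, h1c⟩, h2SQ, h2c⟩ := hp
    have hdisj : Disjoint p.1 p.2 := by
      have : Disjoint Q (S \ Q) := Finset.disjoint_sdiff
      exact Finset.disjoint_of_subset_left h1Q (Finset.disjoint_of_subset_right h2SQ this)
    have hp2Q : p.2 ∩ Q = ∅ := by
      have : Disjoint p.2 Q := (Finset.subset_sdiff.mp h2SQ).2
      exact Finset.disjoint_iff_inter_eq_empty.mp this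
    simp only [Finset.mem_filter, Finset.mem_powersetCard]
    refine ⟨⟨Finset.union_subset (h1Q.trans hQS) (h2SQ.trans (Finset.sdiff_subset)), ?_⟩, ?_⟩
    · rw [Finset.card_union_of_disjoint hdisj, h1c, h2c]
      omega
    · rw [Finset.union_inter_distrib_right, Finset.inter_eq_left.mpr h1Q, hp2Q,
        Finset.union_empty, h1c]
  · intro A hA
    dsimp only
    ext x
    simp only [Finset.mem_union, Finset.mem_inter, Finset.mem_sdiff]
    tauto
  · intro p hp
    simp only [Finset.mem_product, Finset.mem_powersetCard] at hp
    obtain ⟨⟨h1Q, h1c⟩, h2SQ, h2c⟩ := hp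
    have hp2Q : p.2 ∩ Q = ∅ := by
      have : Disjoint p.2 Q := (Finset.subset_sdiff.mp h2SQ).2
      exact Finset.disjoint_iff_inter_eq_empty.mp this
    have h1 : (p.1 ∪ p.2) ∩ Q = p.1 := by
      rw [Finset.union_inter_distrib_right, Finset.inter_eq_left.mpr h1Q, hp2Q,
        Finset.union_empty]
    have h2 : (p.1 ∪ p.2) \ Q = p.2 := by
      rw [Finset.union_sdiff_distrib, Finset.sdiff_eq_empty_iff_subset.mpr h1Q,
        Finset.empty_union, Finset.sdiff_eq_self_iff_disjoint.mpr
          (Finset.disjoint_iff_inter_eq_empty.mpr hp2Q)]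
    rw [h1, h2]

theorem core_miss_pair_count {β : Type*} [DecidableEq β]
    (S Q : Finset β) (n q α : ℕ)
    (hS : S.card = n) (hQS : Q ⊆ S) (hQ : Q.card = q) (hα : α ≤ n) (hq : q ≤ n) :
    (((S.powersetCard α ×ˢ S.powersetCard q).filter
        (fun p => p.2 ∩ (Q \ p.1) = ∅)).card)
      = ∑ k ∈ Finset.Icc (α + q - n) (min α q),
          (n + k - q).choose q * q.choose k * (n - q).choose (α - k) := by
  classical
  subst hS hQ
  set t := ((S.powersetCard α ×ˢ S.powersetCard Q.card).filter
        (fun p => p.2 ∩ (Q \ p.1) = ∅)) with ht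
  -- Step 1: fiber over A
  have h1 : t.card = ∑ A ∈ S.powersetCard α,
      (S.card + (A ∩ Q).card - Q.card).choose Q.card := by
    rw [Finset.card_eq_sum_card_fiberwise (f := Prod.fst) (t := S.powersetCard α)
      (fun p hp => by
        simp only [ht, Finset.mem_coe, Finset.mem_filter, Finset.mem_product] at hp
        exact hp.1.1)]
    refine Finset.sum_congr rfl fun A hA => ?_
    obtain ⟨hAS, hAcard⟩ := Finset.mem_powersetCard.mp hA
    have hfib : (t.filter fun p => p.1 = A).card
        = ((S \ (Q \ A)).powersetCard Q.card).card := by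
      refine Finset.card_bij' (fun p _ => p.2) (fun B _ => (A, B)) ?_ ?_ ?_ ?_
      · intro p hp
        simp only [ht, Finset.mem_filter, Finset.mem_product] at hp
        obtain ⟨⟨⟨_, hB⟩, hcond⟩, hfst⟩ := hp
        rw [Finset.mem_powersetCard] at hB
        rw [Finset.mem_powersetCard]
        refine ⟨Finset.subset_sdiff.mpr ⟨hB.1, ?_⟩, hB.2⟩
        rw [← hfst]
        exact Finset.disjoint_iff_inter_eq_empty.mpr hcond
      · intro B hB
        rw [Finset.mem_powersetCard] at hB
        simp only [ht, Finset.mem_filter, Finset.mem_product]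
        obtain ⟨hBsub, hBc⟩ := hB
        rw [Finset.subset_sdiff] at hBsub
        exact ⟨⟨⟨hA, Finset.mem_powersetCard.mpr ⟨hBsub.1, hBc⟩⟩,
          Finset.disjoint_iff_inter_eq_empty.mp hBsub.2⟩, trivial⟩
      · intro p hp
        simp only [ht, Finset.mem_filter] at hp
        exact Prod.ext hp.2.symm rfl
      · intro B hB
        rfl
    rw [hfib, Finset.card_powersetCard]
    congr 1
    have hQA_S : Q \ A ⊆ S := Finset.sdiff_subset.trans hQS
    rw [Finset.card_sdiff_of_subset hQA_S]
    have h1 := Finset.card_sdiff_add_card_inter Q A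
    have h2 : (Q ∩ A).card = (A ∩ Q).card := by rw [Finset.inter_comm]
    have h3 : Q.card ≤ S.card := Finset.card_le_card hQS
    have h4 : (A ∩ Q).card ≤ Q.card := Finset.card_le_card Finset.inter_subset_right
    omega
  rw [h1]
  -- Step 2: group by k = |A ∩ Q|
  rw [← Finset.sum_fiberwise_of_maps_to (g := fun A => (A ∩ Q).card)
      (t := Finset.Icc (α + Q.card - S.card) (min α Q.card))
      (fun A hA => by
        obtain ⟨hAS, hAcard⟩ := Finset.mem_powersetCard.mp hA
        have h1 : (A ∩ Q).card ≤ α := hAcard ▸ Finset.card_le_card Finset.inter_subset_left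
        have h2 : (A ∩ Q).card ≤ Q.card := Finset.card_le_card Finset.inter_subset_right
        have h3 : (A \ Q).card ≤ (S \ Q).card :=
          Finset.card_le_card (Finset.sdiff_subset_sdiff hAS (le_refl Q))
        have h4 : (S \ Q).card = S.card - Q.card := Finset.card_sdiff_of_subset hQS
        have h5 := Finset.card_sdiff_add_card_inter A Q
        simp only [Finset.mem_Icc]
        omega)]
  refine Finset.sum_congr rfl fun k hk => ?_
  rw [Finset.mem_Icc] at hk
  have hkα : k ≤ α := le_trans hk.2 (min_le_left _ _)
  calc ∑ A ∈ (S.powersetCard α).filter (fun A => (A ∩ Q).card = k),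
        (S.card + (A ∩ Q).card - Q.card).choose Q.card
      = ∑ _A ∈ (S.powersetCard α).filter (fun A => (A ∩ Q).card = k),
        (S.card + k - Q.card).choose Q.card := by
        refine Finset.sum_congr rfl fun A hA => ?_
        rw [(Finset.mem_filter.mp hA).2]
    _ = ((S.powersetCard α).filter (fun A => (A ∩ Q).card = k)).card
        * (S.card + k - Q.card).choose Q.card := by
        rw [Finset.sum_const, smul_eq_mul]
    _ = (S.card + k - Q.card).choose Q.card * Q.card.choose k
        * (S.card - Q.card).choose (α - k) := by
        rw [core_fiber_card S Q hQS α k hkα]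
        ring
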